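/- Fix j1 ∈ [n] and i, l ∈ [d²]. The mixed second-order partial derivative ∂²f(x)_{j1}/∂x_i∂x_l equals f(x)_{j1} ∘ 𝖠_{[j1],i} ∘ 𝖠_{[j1],l} − f(x)_{j1} ∘ 𝖠_{[j1],i} · ⟨f(x)_{j1}, 𝖠_{[j1],l}⟩ − f(x)_{j1} ∘ 𝖠_{[j1],l} · ⟨f(x)_{j1}, 𝖠_{[j1],i}⟩ + 2 f(x)_{j1} · ⟨f(x)_{j1}, 𝖠_{[j1],i}⟩ · ⟨f(x)_{j1}, 𝖠_{[j1],l}⟩ − f(x)_{j1} · ⟨f(x)_{j1}, 𝖠_{[j1],i} ∘ 𝖠_{[j1],l}⟩. -/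

import Mathlib

open Matrix Kronecker

noncomputable section

/-- The `i`-th column of the block `𝖠_{[j1]} ∈ ℝ^{n × d²}` of `𝖠 = A1 ⊗ A2`:
`(𝖠_{[j1],i})_{i2} = 𝖠_{(j1,i2), i}`. -/
def Acol {n d : ℕ} (A1 A2 : Matrix (Fin n) (Fin d) ℝ) (j1 : Fin n)
    (i : Fin d × Fin d) : Fin n → ℝ :=
  fun i2 => (A1 ⊗ₖ A2) (j1, i2) i

/-- `u(x)_{j1} = exp(𝖠_{[j1]} x) ∈ ℝⁿ` (entrywise `exp`), for `𝖠 = A1 ⊗ A2`. -/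
def uvec {n d : ℕ} (A1 A2 : Matrix (Fin n) (Fin d) ℝ) (j1 : Fin n)
    (x : Fin d × Fin d → ℝ) : Fin n → ℝ :=
  fun i2 => Real.exp (∑ q : Fin d × Fin d, (A1 ⊗ₖ A2) (j1, i2) q * x q)

/-- `α(x)_{j1} = ⟨exp(𝖠_{[j1]} x), 1_n⟩`. -/
def alphaval {n d : ℕ} (A1 A2 : Matrix (Fin n) (Fin d) ℝ) (j1 : Fin n)
    (x : Fin d × Fin d → ℝ) : ℝ :=
  ∑ i2 : Fin n, uvec A1 A2 j1 x i2

/-- `f(x)_{j1} = α(x)_{j1}⁻¹ · u(x)_{j1} ∈ ℝⁿ`. -/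
def fvec {n d : ℕ} (A1 A2 : Matrix (Fin n) (Fin d) ℝ) (j1 : Fin n)
    (x : Fin d × Fin d → ℝ) : Fin n → ℝ :=
  fun i2 => (alphaval A1 A2 j1 x)⁻¹ * uvec A1 A2 j1 x i2

def dotClm {ι : Type*} [Fintype ι] (c : ι → ℝ) : (ι → ℝ) →L[ℝ] ℝ :=
  ∑ q, c q • ContinuousLinearMap.proj q

lemma dotClm_apply {ι : Type*} [Fintype ι] (c z : ι → ℝ) :
    dotClm c z = ∑ q, c q * z q := by
  simp [dotClm]

lemma dotClm_single {ι : Type*} [Fintype ι] [DecidableEq ι] (c : ι → ℝ) (m : ι) :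
    dotClm c (Pi.single m 1) = c m := by
  rw [dotClm_apply]
  simp [Pi.single_apply, mul_ite, Finset.sum_ite_eq']

lemma hasFDerivAt_dot {ι : Type*} [Fintype ι] (c : ι → ℝ) (y : ι → ℝ) :
    HasFDerivAt (fun z : ι → ℝ => ∑ q, c q * z q) (dotClm c) y :=
  (dotClm c).hasFDerivAt.congr_fderiv rfl |>.congr_of_eventuallyEq
    (Filter.Eventually.of_forall fun z => (dotClm_apply c z).symm)


variable {n d : ℕ} (A1 A2 : Matrix (Fin n) (Fin d) ℝ) (j1 : Fin n)

lemma hasFDerivAt_uvec (i2 : Fin n) (y : Fin d × Fin d → ℝ) :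
    HasFDerivAt (fun z => uvec A1 A2 j1 z i2)
      (uvec A1 A2 j1 y i2 • dotClm (fun q => (A1 ⊗ₖ A2) (j1, i2) q)) y := by
  have h := (hasFDerivAt_dot (fun q => (A1 ⊗ₖ A2) (j1, i2) q) y).exp
  exact h

lemma hasFDerivAt_alpha (y : Fin d × Fin d → ℝ) :
    HasFDerivAt (fun z => alphaval A1 A2 j1 z)
      (∑ i2 : Fin n, uvec A1 A2 j1 y i2 • dotClm (fun q => (A1 ⊗ₖ A2) (j1, i2) q)) y := by
  exact HasFDerivAt.fun_sum fun i2 _ => hasFDerivAt_uvec A1 A2 j1 i2 y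

lemma alphaval_pos (hn : 0 < n) (y : Fin d × Fin d → ℝ) : 0 < alphaval A1 A2 j1 y := by
  have : Nonempty (Fin n) := ⟨⟨0, hn⟩⟩
  exact Finset.sum_pos (fun i2 _ => Real.exp_pos _) Finset.univ_nonempty

/-- Derivative CLM of `fvec · i2`. -/
def Dfvec (A1 A2 : Matrix (Fin n) (Fin d) ℝ) (j1 : Fin n) (i2 : Fin n)
    (y : Fin d × Fin d → ℝ) : (Fin d × Fin d → ℝ) →L[ℝ] ℝ :=
  fvec A1 A2 j1 y i2 • (dotClm (fun q => (A1 ⊗ₖ A2) (j1, i2) q)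
    - ∑ i2' : Fin n, fvec A1 A2 j1 y i2' • dotClm (fun q => (A1 ⊗ₖ A2) (j1, i2') q))

lemma Dfvec_single (i2 : Fin n) (y : Fin d × Fin d → ℝ) (m : Fin d × Fin d) :
    Dfvec A1 A2 j1 i2 y (Pi.single m 1)
      = fvec A1 A2 j1 y i2 * (Acol A1 A2 j1 m i2
          - ∑ i2' : Fin n, fvec A1 A2 j1 y i2' * Acol A1 A2 j1 m i2') := by
  simp [Dfvec, dotClm_single, Acol, ContinuousLinearMap.sum_apply]

lemma hasFDerivAt_fvec (hn : 0 < n) (i2 : Fin n) (y : Fin d × Fin d → ℝ) :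
    HasFDerivAt (fun z => fvec A1 A2 j1 z i2) (Dfvec A1 A2 j1 i2 y) y := by
  have hαne : alphaval A1 A2 j1 y ≠ 0 := (alphaval_pos A1 A2 j1 hn y).ne'
  have hinv : HasFDerivAt (fun z => (alphaval A1 A2 j1 z)⁻¹)
      ((ContinuousLinearMap.smulRight (1 : ℝ →L[ℝ] ℝ) (-(alphaval A1 A2 j1 y ^ 2)⁻¹)).comp
        (∑ i2 : Fin n, uvec A1 A2 j1 y i2 • dotClm (fun q => (A1 ⊗ₖ A2) (j1, i2) q))) y :=
    (hasFDerivAt_inv hαne).comp y (hasFDerivAt_alpha A1 A2 j1 y)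
  have h := hinv.mul (hasFDerivAt_uvec A1 A2 j1 i2 y)
  refine h.congr_fderiv ?_
  ext v
  simp only [Dfvec, fvec, ContinuousLinearMap.add_apply, ContinuousLinearMap.smul_apply,
    ContinuousLinearMap.comp_apply, ContinuousLinearMap.sum_apply, ContinuousLinearMap.sub_apply,
    ContinuousLinearMap.smulRight_apply, ContinuousLinearMap.one_apply, smul_eq_mul,
    Finset.mul_sum, Finset.sum_apply]
  simp only [mul_assoc, ← Finset.mul_sum]
  field_simp
  ring

lemma fderiv_fvec_apply (hn : 0 < n) (y : Fin d × Fin d → ℝ) (m : Fin d × Fin d) :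
    fderiv ℝ (fun z => fvec A1 A2 j1 z) y (Pi.single m 1)
      = fun i2 => fvec A1 A2 j1 y i2 * (Acol A1 A2 j1 m i2
          - ∑ i2' : Fin n, fvec A1 A2 j1 y i2' * Acol A1 A2 j1 m i2') := by
  have hF : HasFDerivAt (fun z => fvec A1 A2 j1 z)
      (ContinuousLinearMap.pi (fun i2 => Dfvec A1 A2 j1 i2 y)) y :=
    hasFDerivAt_pi.2 fun i2 => hasFDerivAt_fvec A1 A2 j1 hn i2 y
  rw [hF.fderiv]
  funext i2
  rw [ContinuousLinearMap.pi_apply, Dfvec_single]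

theorem second_deriv_fvec' (hn : 0 < n) (i l : Fin d × Fin d) (x : Fin d × Fin d → ℝ) :
    fderiv ℝ (fun y : Fin d × Fin d → ℝ =>
        fderiv ℝ (fun z : Fin d × Fin d → ℝ => fvec A1 A2 j1 z) y (Pi.single i 1))
      x (Pi.single l 1)
      = fun i2 =>
          fvec A1 A2 j1 x i2 * Acol A1 A2 j1 i i2 * Acol A1 A2 j1 l i2
          - fvec A1 A2 j1 x i2 * Acol A1 A2 j1 i i2
              * (∑ i2' : Fin n, fvec A1 A2 j1 x i2' * Acol A1 A2 j1 l i2')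
          - fvec A1 A2 j1 x i2 * Acol A1 A2 j1 l i2
              * (∑ i2' : Fin n, fvec A1 A2 j1 x i2' * Acol A1 A2 j1 i i2')
          + 2 * fvec A1 A2 j1 x i2
              * (∑ i2' : Fin n, fvec A1 A2 j1 x i2' * Acol A1 A2 j1 i i2')
              * (∑ i2' : Fin n, fvec A1 A2 j1 x i2' * Acol A1 A2 j1 l i2')
          - fvec A1 A2 j1 x i2
              * ∑ i2' : Fin n, fvec A1 A2 j1 x i2'
                  * (Acol A1 A2 j1 i i2' * Acol A1 A2 j1 l i2') := by
  have hrw : (fun y : Fin d × Fin d → ℝ =>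
      fderiv ℝ (fun z : Fin d × Fin d → ℝ => fvec A1 A2 j1 z) y (Pi.single i 1))
      = fun y => fun i2 => fvec A1 A2 j1 y i2 * (Acol A1 A2 j1 i i2
          - ∑ i2' : Fin n, fvec A1 A2 j1 y i2' * Acol A1 A2 j1 i i2') :=
    funext fun y => fderiv_fvec_apply A1 A2 j1 hn y i
  rw [hrw]
  have hG : ∀ i2 : Fin n, HasFDerivAt
      (fun y => fvec A1 A2 j1 y i2 * (Acol A1 A2 j1 i i2
          - ∑ i2' : Fin n, fvec A1 A2 j1 y i2' * Acol A1 A2 j1 i i2'))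
      (fvec A1 A2 j1 x i2 •
          (-(∑ i2' : Fin n, Acol A1 A2 j1 i i2' • Dfvec A1 A2 j1 i2' x)) +
        (Acol A1 A2 j1 i i2 - ∑ i2' : Fin n, fvec A1 A2 j1 x i2' * Acol A1 A2 j1 i i2') •
          Dfvec A1 A2 j1 i2 x) x := fun i2 =>
    (hasFDerivAt_fvec A1 A2 j1 hn i2 x).mul
      ((HasFDerivAt.fun_sum fun i2' _ =>
        (hasFDerivAt_fvec A1 A2 j1 hn i2' x).mul_const (Acol A1 A2 j1 i i2')).const_sub
        (Acol A1 A2 j1 i i2))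
  have hF : HasFDerivAt _ (ContinuousLinearMap.pi fun i2 =>
      (fvec A1 A2 j1 x i2 •
          (-(∑ i2' : Fin n, Acol A1 A2 j1 i i2' • Dfvec A1 A2 j1 i2' x)) +
        (Acol A1 A2 j1 i i2 - ∑ i2' : Fin n, fvec A1 A2 j1 x i2' * Acol A1 A2 j1 i i2') •
          Dfvec A1 A2 j1 i2 x)) x := hasFDerivAt_pi.2 hG
  rw [hF.fderiv]
  funext i2
  rw [ContinuousLinearMap.pi_apply]
  simp only [ContinuousLinearMap.add_apply, ContinuousLinearMap.smul_apply,
    ContinuousLinearMap.neg_apply, ContinuousLinearMap.sum_apply, Dfvec_single, smul_eq_mul]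
  set Si := ∑ i2' : Fin n, fvec A1 A2 j1 x i2' * Acol A1 A2 j1 i i2' with hSi
  set Sl := ∑ i2' : Fin n, fvec A1 A2 j1 x i2' * Acol A1 A2 j1 l i2' with hSl
  set T := ∑ i2' : Fin n, fvec A1 A2 j1 x i2'
      * (Acol A1 A2 j1 i i2' * Acol A1 A2 j1 l i2') with hT
  have hsum : ∑ i2' : Fin n, Acol A1 A2 j1 i i2'
      * (fvec A1 A2 j1 x i2' * (Acol A1 A2 j1 l i2' - Sl)) = T - Si * Sl := by
    rw [hT, hSi, Finset.sum_mul, ← Finset.sum_sub_distrib]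
    exact Finset.sum_congr rfl fun i2' _ => by ring
  rw [hsum]
  ring


/-- For fixed `j1 ∈ [n]` and `i, l ∈ [d²]`,
`∂² f(x)_{j1} / ∂x_i ∂x_l
  = f(x)_{j1} ∘ 𝖠_{[j1],i} ∘ 𝖠_{[j1],l}
    − f(x)_{j1} ∘ 𝖠_{[j1],i} · ⟨f(x)_{j1}, 𝖠_{[j1],l}⟩
    − f(x)_{j1} ∘ 𝖠_{[j1],l} · ⟨f(x)_{j1}, 𝖠_{[j1],i}⟩
    + 2 f(x)_{j1} · ⟨f(x)_{j1}, 𝖠_{[j1],i}⟩ · ⟨f(x)_{j1}, 𝖠_{[j1],l}⟩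
    − f(x)_{j1} · ⟨f(x)_{j1}, 𝖠_{[j1],i} ∘ 𝖠_{[j1],l}⟩`. -/
theorem second_deriv_fvec (n d : ℕ) (A1 A2 : Matrix (Fin n) (Fin d) ℝ)
    (j1 : Fin n) (i l : Fin d × Fin d) (x : Fin d × Fin d → ℝ) :
    fderiv ℝ (fun y : Fin d × Fin d → ℝ =>
        fderiv ℝ (fun z : Fin d × Fin d → ℝ => fvec A1 A2 j1 z) y (Pi.single i 1))
      x (Pi.single l 1)
      = fun i2 =>
          fvec A1 A2 j1 x i2 * Acol A1 A2 j1 i i2 * Acol A1 A2 j1 l i2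
          - fvec A1 A2 j1 x i2 * Acol A1 A2 j1 i i2
              * (∑ i2' : Fin n, fvec A1 A2 j1 x i2' * Acol A1 A2 j1 l i2')
          - fvec A1 A2 j1 x i2 * Acol A1 A2 j1 l i2
              * (∑ i2' : Fin n, fvec A1 A2 j1 x i2' * Acol A1 A2 j1 i i2')
          + 2 * fvec A1 A2 j1 x i2
              * (∑ i2' : Fin n, fvec A1 A2 j1 x i2' * Acol A1 A2 j1 i i2')
              * (∑ i2' : Fin n, fvec A1 A2 j1 x i2' * Acol A1 A2 j1 l i2')
          - fvec A1 A2 j1 x i2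
              * ∑ i2' : Fin n, fvec A1 A2 j1 x i2'
                  * (Acol A1 A2 j1 i i2' * Acol A1 A2 j1 l i2') := by
  rcases Nat.eq_zero_or_pos n with hn | hn
  · subst hn
    funext i2
    exact i2.elim0
  · exact second_deriv_fvec' A1 A2 j1 hn i l x
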